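/- For all real x ≥ 2, log g(x) ≥ log f(x) − 2/x, where g(x) = (e^γ/ζ(2))·log θ(x)·∏_{p ≤ x}(1 + 1/p)^{-1} and f(x) = e^γ·log θ(x)·∏_{p ≤ x}(1 − 1/p), and θ(x) = ∑_{p ≤ x} log p is Chebyshev's first function (assume θ(x) > 1 so both logarithms are defined and the quantities positive). -/

import Mathlib

open Finset Real Filter

/-- Dedekind psi function `Ψ(n) = n ∏_{p ∣ n} (1 + 1/p)`. -/
noncomputable def dedekindPsi (n : ℕ) : ℝ := n * ∏ p ∈ n.primeFactors, (1 + 1/(p:ℝ))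

/-- `nthPrime n` is the n-th prime `p_n` (1-indexed: `nthPrime 1 = 2`). -/
noncomputable def nthPrime (n : ℕ) : ℕ := Nat.nth Nat.Prime (n - 1)

/-- `primorialN k = N_k`, the product of the first `k` primes. -/
noncomputable def primorialN (k : ℕ) : ℕ := ∏ i ∈ Finset.range k, Nat.nth Nat.Prime i
/-- Chebyshev's first function `θ(x) = ∑_{p ≤ x} log p`. -/
noncomputable def chebTheta (x : ℝ) : ℝ :=
  ∑ p ∈ (Finset.range (⌊x⌋₊ + 1)).filter Nat.Prime, Real.log p

noncomputable def gfun (x : ℝ) : ℝ :=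
  Real.exp Real.eulerMascheroniConstant / (Real.pi^2 / 6) * Real.log (chebTheta x)
    * ∏ p ∈ (Finset.range (⌊x⌋₊ + 1)).filter Nat.Prime, (1 + 1/(p:ℝ))⁻¹

noncomputable def ffun (x : ℝ) : ℝ :=
  Real.exp Real.eulerMascheroniConstant * Real.log (chebTheta x)
    * ∏ p ∈ (Finset.range (⌊x⌋₊ + 1)).filter Nat.Prime, (1 - 1/(p:ℝ))

set_option maxHeartbeats 1000000

/-- the completely multiplicative function n ↦ 1/n². -/
noncomputable def fsq : ℕ →* ℝ where
  toFun n := ((n:ℝ)^2)⁻¹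
  map_one' := by norm_num
  map_mul' m n := by push_cast; rw [mul_pow, mul_inv]

lemma fsq_summable : Summable (fun n : ℕ => ((n:ℝ)^2)⁻¹) := by
  simpa [one_div] using Real.summable_one_div_nat_pow.mpr one_lt_two

lemma hasSum_tele (M : ℕ) (hM : 0 < M) :
    HasSum (fun n : ℕ => 1/((n:ℝ)+M) - 1/((n:ℝ)+M+1)) (1/(M:ℝ)) := by
  have hnn : ∀ n : ℕ, 0 ≤ 1/((n:ℝ)+M) - 1/((n:ℝ)+M+1) := by
    intro n
    have h1 : (0:ℝ) < (n:ℝ)+M := by positivity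
    have h2 : (0:ℝ) < (n:ℝ)+M+1 := by positivity
    have := one_div_le_one_div_of_le h1 (by linarith : (n:ℝ)+M ≤ (n:ℝ)+M+1)
    linarith
  rw [hasSum_iff_tendsto_nat_of_nonneg hnn]
  have heq : ∀ n : ℕ, ∑ i ∈ range n, (1/((i:ℝ)+M) - 1/((i:ℝ)+M+1))
      = 1/(M:ℝ) - 1/((n:ℝ)+M) := by
    intro n
    have := Finset.sum_range_sub' (fun i : ℕ => 1/((i:ℝ)+M)) n
    simp only [Nat.cast_add, Nat.cast_one] at this ⊢
    rw [show (1:ℝ)/(M:ℝ) = 1/(↑(0:ℕ) + (M:ℝ)) by norm_num, ← this]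
    exact Finset.sum_congr rfl fun i _ => by ring_nf
  simp only [heq]
  have : Tendsto (fun n : ℕ => 1/((n:ℝ)+M)) atTop (nhds 0) := by
    have h : Tendsto (fun n : ℕ => (n:ℝ)+M) atTop atTop :=
      tendsto_atTop_add_const_right _ _ tendsto_natCast_atTop_atTop
    simpa [one_div, Pi.inv_def] using h.inv_tendsto_atTop
  simpa using (tendsto_const_nhds (x := 1/(M:ℝ))).sub this

lemma sum_sq_ge (N : ℕ) (hN : 2 ≤ N) :
    (π:ℝ)^2/6 - 1/N ≤ ∑ n ∈ Finset.range (N+1), ((n:ℝ)^2)⁻¹ := by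
  have hs := hasSum_zeta_two
  have hsum : Summable (fun n : ℕ => 1/(n:ℝ)^2) := hs.summable
  have hsplit := Summable.sum_add_tsum_nat_add (f := fun n : ℕ => 1/(n:ℝ)^2) (N+1) hsum
  rw [hs.tsum_eq] at hsplit
  have htele := hasSum_tele N (by omega)
  have htail : (∑' n : ℕ, 1/((n+(N+1) : ℕ):ℝ)^2) ≤ 1/(N:ℝ) := by
    rw [← htele.tsum_eq]
    refine Summable.tsum_le_tsum (fun n => ?_) ((summable_nat_add_iff (N+1)).mpr hsum) htele.summable
    have ha : (0:ℝ) < (n:ℝ)+N := by positivity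
    have hb : (0:ℝ) < (n:ℝ)+N+1 := by positivity
    have key : 1/(((n:ℝ)+N+1))^2 ≤ 1/((n:ℝ)+N) - 1/((n:ℝ)+N+1) := by
      rw [div_sub_div _ _ (ne_of_gt ha) (ne_of_gt hb)]
      rw [div_le_div_iff₀ (by positivity) (by positivity)]
      ring_nf
      nlinarith
    calc (1:ℝ)/((n+(N+1) : ℕ):ℝ)^2 = 1/(((n:ℝ)+N+1))^2 := by push_cast; ring_nf
      _ ≤ _ := key
  have : ∑ n ∈ Finset.range (N+1), 1/(n:ℝ)^2 = ∑ n ∈ Finset.range (N+1), ((n:ℝ)^2)⁻¹ := by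
    simp [one_div]
  linarith [hsplit, htail, this ▸ hsplit]

lemma euler_ge (N : ℕ) (hN : 2 ≤ N) :
    (π:ℝ)^2/6 - 1/N ≤ ∏ p ∈ Nat.primesBelow (N+1), (1 - ((p:ℝ)^2)⁻¹)⁻¹ := by
  have hprod := EulerProduct.prod_primesBelow_geometric_eq_tsum_smoothNumbers
    (f := fsq) fsq_summable (N+1)
  have hfp : ∀ p : ℕ, fsq p = ((p:ℝ)^2)⁻¹ := fun p => rfl
  have h1 : ∑ n ∈ Finset.range (N+1), ((n:ℝ)^2)⁻¹
      ≤ ∑' m : (Nat.smoothNumbers (N+1)), fsq m := by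
    rw [_root_.tsum_subtype]
    have hsummable : Summable ((Nat.smoothNumbers (N+1)).indicator fsq) :=
      fsq_summable.indicator _
    refine le_trans (le_of_eq ?_) (Summable.sum_le_tsum (Finset.range (N+1))
      (fun i _ => Set.indicator_nonneg (fun j _ => inv_nonneg.mpr (sq_nonneg _)) i) hsummable)
    refine Finset.sum_congr rfl fun n hn => ?_
    rcases eq_or_ne n 0 with rfl | hn0
    · simp [Set.indicator, hfp]
    · rw [Set.indicator_of_mem (Nat.mem_smoothNumbers'.mpr fun p hp hdvd =>
        Nat.lt_succ_of_le ((Nat.le_of_dvd (Nat.pos_of_ne_zero hn0) hdvd).trans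
          (Nat.lt_succ_iff.mp (Finset.mem_range.mp hn))))]
      exact (hfp n).symm
  calc (π:ℝ)^2/6 - 1/N ≤ ∑ n ∈ Finset.range (N+1), ((n:ℝ)^2)⁻¹ := sum_sq_ge N hN
    _ ≤ ∑' m : (Nat.smoothNumbers (N+1)), fsq m := h1
    _ = ∏ p ∈ Nat.primesBelow (N+1), (1 - ((p:ℝ)^2)⁻¹)⁻¹ := hprod.symm

lemma exp_neg_le {t : ℝ} (h0 : 0 ≤ t) (h1 : t ≤ 1) :
    Real.exp (-t) ≤ 1 - (6/π^2) * t := by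
  have hc := convexOn_exp.2 (Set.mem_univ (-1:ℝ)) (Set.mem_univ (0:ℝ))
    h0 (by linarith : (0:ℝ) ≤ 1 - t) (by ring)
  simp only [smul_eq_mul, mul_neg, mul_one, mul_zero, add_zero, Real.exp_zero] at hc
  have hpi : (3.141592:ℝ) < π := Real.pi_gt_d6
  have he1 : Real.exp 1 < 2.7182818286 := Real.exp_one_lt_d9
  have he2 : (2.7182818283:ℝ) < Real.exp 1 := Real.exp_one_gt_d9
  have hen : Real.exp (-1) = (Real.exp 1)⁻¹ := Real.exp_neg 1
  have hepos : (0:ℝ) < Real.exp 1 := Real.exp_pos 1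
  have hkey : Real.exp (-1:ℝ) ≤ 1 - 6/π^2 := by
    rw [hen]
    rw [inv_le_iff_one_le_mul₀ hepos]
    have hpi2 : (9.86:ℝ) < π^2 := by nlinarith
    have h6 : 6/π^2 < 0.609 := by
      rw [div_lt_iff₀ (by nlinarith)]
      nlinarith
    nlinarith
  calc Real.exp (-t) ≤ t * Real.exp (-1) + (1-t) := hc
    _ ≤ t * (1 - 6/π^2) + (1-t) := by nlinarith
    _ = 1 - (6/π^2) * t := by ring

theorem log_g_ge (x : ℝ) (hx : 2 ≤ x) (hθ : 1 < chebTheta x) :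
    Real.log (gfun x) ≥ Real.log (ffun x) - 2 / x := by
  set N := ⌊x⌋₊ with hNdef
  have hN2 : 2 ≤ N := Nat.le_floor (by exact_mod_cast hx)
  have hxN : x < N + 1 := Nat.lt_floor_add_one x
  have hx0 : (0:ℝ) < x := by linarith
  set S := (Finset.range (N + 1)).filter Nat.Prime with hSdef
  have hp2 : ∀ p ∈ S, (2:ℝ) ≤ (p:ℝ) := fun p hp => by
    exact_mod_cast (Finset.mem_filter.mp hp).2.two_le
  set Pf := ∏ p ∈ S, (1 - 1/(p:ℝ)) with hPf
  set Pp := ∏ p ∈ S, (1 + 1/(p:ℝ)) with hPp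
  set Q := ∏ p ∈ S, (1 - ((p:ℝ)^2)⁻¹) with hQ
  have hPf_pos : 0 < Pf := Finset.prod_pos fun p hp => by
    have := hp2 p hp
    have : 1/(p:ℝ) ≤ 1/2 := by
      apply one_div_le_one_div_of_le <;> linarith
    linarith
  have hPp_pos : 0 < Pp := Finset.prod_pos fun p hp => by
    have := hp2 p hp; positivity
  have hQ_pos : 0 < Q := Finset.prod_pos fun p hp => by
    have h2 := hp2 p hp
    have h4 : (4:ℝ) ≤ (p:ℝ)^2 := by nlinarith
    have : ((p:ℝ)^2)⁻¹ ≤ 4⁻¹ := by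
      apply inv_anti₀ <;> linarith
    linarith
  have hQeq : Q = Pf * Pp := by
    rw [hPf, hPp, ← Finset.prod_mul_distrib]
    refine Finset.prod_congr rfl fun p hp => ?_
    have h2 := hp2 p hp
    have hne : (p:ℝ) ≠ 0 := by linarith
    field_simp
    ring
  -- the Euler-product bound
  have hSprimes : Nat.primesBelow (N+1) = S := rfl
  have heuler : (π:ℝ)^2/6 - 1/(N:ℝ) ≤ Q⁻¹ := by
    have := euler_ge N hN2
    rwa [hSprimes, Finset.prod_inv_distrib] at this
  -- 1/N ≤ 2/x and 2/x ≤ 1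
  have htN : 1/(N:ℝ) ≤ 2/x := by
    rw [div_le_div_iff₀ (by exact_mod_cast (by omega : 0 < N)) hx0]
    have : ((N:ℝ)) + 1 ≤ 2 * N := by
      have : (2:ℝ) ≤ (N:ℝ) := by exact_mod_cast hN2
      linarith
    linarith
  have ht1 : 2/x ≤ 1 := by rw [div_le_one hx0]; linarith
  have ht0 : 0 ≤ 2/x := by positivity
  -- π²/6 * exp(-2/x) ≤ π²/6 - 1/N
  have hpi_pos : (0:ℝ) < π := Real.pi_pos
  have hconv := exp_neg_le ht0 ht1
  have hstep : (π:ℝ)^2/6 * Real.exp (-(2/x)) ≤ (π:ℝ)^2/6 - 1/(N:ℝ) := by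
    have hmul : (π:ℝ)^2/6 * ((6/π^2) * (2/x)) = 2/x := by
      field_simp
    nlinarith [sq_nonneg π, Real.exp_pos (-(2/x))]
  have hbound : (π:ℝ)^2/6 * Q ≤ Real.exp (2/x) := by
    have h1 : (π:ℝ)^2/6 * Real.exp (-(2/x)) ≤ Q⁻¹ := le_trans hstep heuler
    have h2 : ((π:ℝ)^2/6 * Real.exp (-(2/x))) * Q ≤ Q⁻¹ * Q := by
      exact mul_le_mul_of_nonneg_right h1 hQ_pos.le
    rw [inv_mul_cancel₀ hQ_pos.ne'] at h2
    rw [Real.exp_neg] at h2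
    have h3 : (π:ℝ)^2/6 * Q * (Real.exp (2/x))⁻¹ ≤ 1 := by
      calc (π:ℝ)^2/6 * Q * (Real.exp (2/x))⁻¹
          = (π:ℝ)^2/6 * (Real.exp (2/x))⁻¹ * Q := by ring
        _ ≤ 1 := h2
    rw [← div_eq_mul_inv, div_le_one (Real.exp_pos _)] at h3
    exact h3
  -- L positivity
  have hL_pos : 0 < Real.log (chebTheta x) := Real.log_pos hθ
  have hffun_pos : 0 < ffun x := by
    unfold ffun
    have : (0:ℝ) < Real.exp Real.eulerMascheroniConstant := Real.exp_pos _
    exact mul_pos (mul_pos this hL_pos) hPf_pos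
  have hC_pos : 0 < (π:ℝ)^2/6 * Q := by positivity
  -- gfun = ffun * ((π²/6)·Q)⁻¹
  have hgf : gfun x = ffun x * ((π:ℝ)^2/6 * Q)⁻¹ := by
    unfold gfun ffun
    rw [Finset.prod_inv_distrib, hQeq]
    rw [div_eq_mul_inv]
    field_simp
    ring
  rw [hgf, Real.log_mul hffun_pos.ne' (inv_ne_zero hC_pos.ne'), Real.log_inv]
  have hlog : Real.log ((π:ℝ)^2/6 * Q) ≤ 2/x :=
    (Real.log_le_iff_le_exp hC_pos).mpr hbound
  linarith
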